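/- Suppose each gradient ∇g_i is Lipschitz continuous on ℝ^n with constant L. Let ω > 0, x ∈ ℝ^n and put d := d_ω(x). Then for every i = 1,…,m, F_i(x + d) ≤ F_i(x) + ((L − 2ω)/2)‖d‖²; moreover, if d ≠ 0 this inequality is strict. In particular, if ω > L/2 and d ≠ 0 then F_i(x + d) < F_i(x) for all i. -/

import Mathlib

open Filter Topology
open scoped RealInnerProductSpace

noncomputable section

/-- `Euc n` is Euclidean `n`-space `ℝ^n`. -/
abbrev Euc (n : ℕ) := EuclideanSpace ℝ (Fin n)

/-- `HasDirDeriv f x d D` : the one-sided directional derivative of `f` at `x`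
in direction `d` exists and equals `D`, i.e. `(f (x + α • d) - f x)/α → D` as `α → 0⁺`. -/
def HasDirDeriv {n : ℕ} (f : Euc n → ℝ) (x d : Euc n) (D : ℝ) : Prop :=
  Filter.Tendsto (fun α : ℝ => (f (x + α • d) - f x) / α)
    (nhdsWithin 0 (Set.Ioi 0)) (nhds D)

/-- `x` is Pareto stationary for the objectives `F i`:
for every direction `d`, `max_i F_i'(x; d) ≥ 0`, i.e. some objective has
nonnegative directional derivative in direction `d`. -/
def ParetoStationary {n m : ℕ} (F : Fin m → Euc n → ℝ) (x : Euc n) : Prop :=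
  ∀ d : Euc n, ∃ i : Fin m, ∃ D : ℝ, HasDirDeriv (F i) x d D ∧ 0 ≤ D

/-- `θ_x(d) = max_i { ⟪∇g_i(x), d⟫ + ½⟪d, B_i(x) d⟫ + h_i(x+d) - h_i(x) }`. -/
def theta {n m : ℕ} (g h : Fin m → Euc n → ℝ)
    (B : Fin m → Euc n → (Euc n →L[ℝ] Euc n)) (x d : Euc n) : ℝ :=
  ⨆ i : Fin m, (⟪gradient (g i) x, d⟫ + (1 / 2) * ⟪d, B i x d⟫ + h i (x + d) - h i x)

/-- `φ_{ω,x}(d) = θ_x(d) + (ω/2)‖d‖²`. -/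
def phi {n m : ℕ} (g h : Fin m → Euc n → ℝ)
    (B : Fin m → Euc n → (Euc n →L[ℝ] Euc n)) (ω : ℝ) (x d : Euc n) : ℝ :=
  theta g h B x d + (ω / 2) * ‖d‖ ^ 2



lemma descent_lemma {n : ℕ} (f : Euc n → ℝ) (hf : ContDiff ℝ 2 f)
    (L : NNReal) (hL : LipschitzWith L (gradient f)) (x d : Euc n) :
    f (x + d) ≤ f x + ⟪gradient f x, d⟫ + ((L : ℝ) / 2) * ‖d‖ ^ 2 := by
  have hdiff : Differentiable ℝ f := hf.differentiable (by norm_num)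
  set c : ℝ := ⟪gradient f x, d⟫ with hc
  set q : ℝ := ‖d‖ ^ 2 with hq
  set G : ℝ → ℝ := fun t => f (x + t • d) - t * c - ((L : ℝ) / 2) * t ^ 2 * q with hG
  have hDeriv : ∀ t : ℝ, HasDerivAt G
      (⟪gradient f (x + t • d), d⟫ - c - (L : ℝ) * t * q) t := by
    intro t
    have h1 : HasDerivAt (fun t : ℝ => x + t • d) d t := by
      simpa using ((hasDerivAt_id t).smul_const d).const_add x
    have h2 : HasFDerivAt f (InnerProductSpace.toDual ℝ _ (gradient f (x + t • d))) (x + t • d) :=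
      ((hdiff (x + t • d)).hasGradientAt).hasFDerivAt
    have h3 : HasDerivAt (fun t : ℝ => f (x + t • d)) ⟪gradient f (x + t • d), d⟫ t := by
      simpa [Function.comp_def] using h2.comp_hasDerivAt t h1
    have h4 : HasDerivAt (fun t : ℝ => t * c) c t := by
      simpa using (hasDerivAt_id t).mul_const c
    have h5 : HasDerivAt (fun t : ℝ => ((L : ℝ) / 2) * t ^ 2 * q) ((L : ℝ) * t * q) t := by
      have := ((hasDerivAt_pow 2 t).const_mul ((L : ℝ) / 2)).mul_const q
      refine this.congr_deriv ?_
      simp only [Nat.cast_ofNat, show (2:ℕ) - 1 = 1 from rfl, pow_one]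
      ring
    exact (h3.sub h4).sub h5
  have hanti : AntitoneOn G (Set.Icc (0 : ℝ) 1) := by
    apply antitoneOn_of_deriv_nonpos (convex_Icc 0 1)
    · exact fun t _ => (hDeriv t).continuousAt.continuousWithinAt
    · exact fun t _ => (hDeriv t).differentiableAt.differentiableWithinAt
    · intro t ht
      rw [interior_Icc] at ht
      rw [(hDeriv t).deriv]
      have hip : ⟪gradient f (x + t • d) - gradient f x, d⟫ ≤ (L : ℝ) * t * q := by
        calc ⟪gradient f (x + t • d) - gradient f x, d⟫
            ≤ ‖gradient f (x + t • d) - gradient f x‖ * ‖d‖ := real_inner_le_norm _ _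
          _ ≤ ((L : ℝ) * ‖t • d‖) * ‖d‖ := by
              apply mul_le_mul_of_nonneg_right _ (norm_nonneg d)
              have := hL.dist_le_mul (x + t • d) x
              simpa [dist_eq_norm] using this
          _ = (L : ℝ) * t * q := by
              rw [norm_smul, Real.norm_eq_abs, abs_of_pos ht.1, hq]; ring
      have := inner_sub_left (𝕜 := ℝ) (gradient f (x + t • d)) (gradient f x) d
      rw [this] at hip
      linarith
  have := hanti (Set.left_mem_Icc.2 zero_le_one) (Set.right_mem_Icc.2 zero_le_one) zero_le_one
  simp only [hG] at this
  simp only [zero_smul, one_smul, add_zero] at this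
  nlinarith [this]


-- key estimate: theta at the minimizer is ≤ -ω ‖d‖²
lemma theta_le {n m : ℕ} (g h : Fin m → Euc n → ℝ)
    (B : Fin m → Euc n → (Euc n →L[ℝ] Euc n))
    (hm : 0 < m)
    (hh : ∀ i, ConvexOn ℝ Set.univ (h i))
    (hBpos : ∀ i x (d : Euc n), d ≠ 0 → 0 < ⟪d, B i x d⟫)
    (ω : ℝ) (hω : 0 < ω) (x : Euc n) (d : Euc n)
    (hmin : ∀ e, phi g h B ω x d ≤ phi g h B ω x e) :
    theta g h B x d ≤ -ω * ‖d‖ ^ 2 := by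
  haveI hne : Nonempty (Fin m) := ⟨⟨0, hm⟩⟩
  have hBnn : ∀ i (e : Euc n), 0 ≤ ⟪e, B i x e⟫ := by
    intro i e
    rcases eq_or_ne e 0 with rfl | he
    · simp
    · exact (hBpos i x e he).le
  -- convexity along the segment: theta (t • d) ≤ t * theta d for t ∈ [0,1]
  have hconv : ∀ t : ℝ, 0 ≤ t → t ≤ 1 →
      theta g h B x (t • d) ≤ t * theta g h B x d := by
    intro t ht0 ht1
    have hbdd : BddAbove (Set.range fun i : Fin m =>
        (⟪gradient (g i) x, d⟫ + (1 / 2) * ⟪d, B i x d⟫ + h i (x + d) - h i x)) :=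
      Set.Finite.bddAbove (Set.finite_range _)
    apply ciSup_le
    intro i
    have hterm : ⟪gradient (g i) x, t • d⟫ + (1 / 2) * ⟪t • d, B i x (t • d)⟫
        + h i (x + t • d) - h i x
        ≤ t * (⟪gradient (g i) x, d⟫ + (1 / 2) * ⟪d, B i x d⟫ + h i (x + d) - h i x) := by
      have h1 : ⟪gradient (g i) x, t • d⟫ = t * ⟪gradient (g i) x, d⟫ :=
        real_inner_smul_right _ _ _
      have h2 : ⟪t • d, B i x (t • d)⟫ = t ^ 2 * ⟪d, B i x d⟫ := by
        rw [map_smul, real_inner_smul_left, real_inner_smul_right]; ring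
      have h3 : h i (x + t • d) ≤ (1 - t) * h i x + t * h i (x + d) := by
        have := (hh i).2 (Set.mem_univ x) (Set.mem_univ (x + d))
          (by linarith : (0:ℝ) ≤ 1 - t) ht0 (by ring)
        have heq : (1 - t) • x + t • (x + d) = x + t • d := by
          module
        rw [heq] at this
        simpa [smul_eq_mul] using this
      have h4 : t ^ 2 * ⟪d, B i x d⟫ ≤ t * ⟪d, B i x d⟫ := by
        nlinarith [mul_nonneg (mul_nonneg ht0 (sub_nonneg.2 ht1)) (hBnn i d)]
      rw [h1, h2]
      nlinarith [h3, h4]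
    calc ⟪gradient (g i) x, t • d⟫ + (1 / 2) * ⟪t • d, B i x (t • d)⟫
          + h i (x + t • d) - h i x
        ≤ t * (⟪gradient (g i) x, d⟫ + (1 / 2) * ⟪d, B i x d⟫ + h i (x + d) - h i x) := hterm
      _ ≤ t * theta g h B x d :=
          mul_le_mul_of_nonneg_left (le_ciSup hbdd i) ht0
  -- for t ∈ [0,1): theta d ≤ -(ω/2)(1+t)‖d‖²
  have hstep : ∀ t : ℝ, 0 ≤ t → t < 1 →
      theta g h B x d ≤ -(ω / 2) * (1 + t) * ‖d‖ ^ 2 := by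
    intro t ht0 ht1
    have h1 := hmin (t • d)
    unfold phi at h1
    have h2 := hconv t ht0 ht1.le
    have hn : ‖t • d‖ ^ 2 = t ^ 2 * ‖d‖ ^ 2 := by
      rw [norm_smul, Real.norm_eq_abs, mul_pow, sq_abs]
    rw [hn] at h1
    have h3 : (1 - t) * theta g h B x d ≤ (ω / 2) * (t ^ 2 - 1) * ‖d‖ ^ 2 := by nlinarith
    have h4 : (ω / 2) * (t ^ 2 - 1) * ‖d‖ ^ 2 = (1 - t) * (-(ω / 2) * (1 + t) * ‖d‖ ^ 2) := by
      ring
    rw [h4] at h3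
    exact le_of_mul_le_mul_left (by linarith [h3]) (by linarith : (0:ℝ) < 1 - t)
  -- take the limit t → 1
  have htend : Tendsto (fun k : ℕ => -(ω / 2) * (1 + (1 - 1 / (k + 1))) * ‖d‖ ^ 2)
      atTop (nhds (-ω * ‖d‖ ^ 2)) := by
    have h0 : Tendsto (fun k : ℕ => 1 / ((k : ℝ) + 1)) atTop (nhds 0) :=
      tendsto_one_div_add_atTop_nhds_zero_nat
    have := ((h0.const_sub 2).const_mul (-(ω / 2))).mul_const (‖d‖ ^ 2)
    convert this using 2 with k
    · ring
    · ring
  apply ge_of_tendsto' htend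
  intro k
  apply hstep
  · have : (1 : ℝ) / (k + 1) ≤ 1 := by
      rw [div_le_one (by positivity)]
      linarith [Nat.cast_nonneg (α := ℝ) k]
    linarith
  · have : (0 : ℝ) < 1 / (k + 1) := by positivity
    linarith


/-- descent property of the full proximal quasi-Newton step. -/
theorem full_step_descent
    {n m : ℕ} (g h : Fin m → Euc n → ℝ)
    (B : Fin m → Euc n → (Euc n →L[ℝ] Euc n))
    (hm : 0 < m)
    (hg : ∀ i, ContDiff ℝ 2 (g i))
    (hsc : ∀ i, ∃ a : ℝ, 0 < a ∧ ∀ x y : Euc n,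
      a * ‖x - y‖ ^ 2 ≤ ⟪gradient (g i) x - gradient (g i) y, x - y⟫)
    (hh : ∀ i, ConvexOn ℝ Set.univ (h i))
    (hBsymm : ∀ i x (u v : Euc n), ⟪B i x u, v⟫ = ⟪u, B i x v⟫)
    (hBpos : ∀ i x (d : Euc n), d ≠ 0 → 0 < ⟪d, B i x d⟫)
    (L : NNReal) (hL : ∀ i, LipschitzWith L (gradient (g i)))
    (ω : ℝ) (hω : 0 < ω)
    (dω : Euc n → Euc n)
    (hmin : ∀ y d, phi g h B ω y (dω y) ≤ phi g h B ω y d)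
    (x : Euc n) :
    ∀ i,
      (g i (x + dω x) + h i (x + dω x)
          ≤ g i x + h i x + (((L : ℝ) - 2 * ω) / 2) * ‖dω x‖ ^ 2) ∧
      (dω x ≠ 0 → g i (x + dω x) + h i (x + dω x)
          < g i x + h i x + (((L : ℝ) - 2 * ω) / 2) * ‖dω x‖ ^ 2) ∧
      ((L : ℝ) / 2 < ω ∧ dω x ≠ 0 →
          g i (x + dω x) + h i (x + dω x) < g i x + h i x) := by
  intro i
  set d := dω x with hd
  have hkey : theta g h B x d ≤ -ω * ‖d‖ ^ 2 :=
    theta_le g h B hm hh hBpos ω hω x d (fun e => hmin x e)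
  have hbdd : BddAbove (Set.range fun i : Fin m =>
      (⟪gradient (g i) x, d⟫ + (1 / 2) * ⟪d, B i x d⟫ + h i (x + d) - h i x)) :=
    Set.Finite.bddAbove (Set.finite_range _)
  have hterm : ⟪gradient (g i) x, d⟫ + (1 / 2) * ⟪d, B i x d⟫ + h i (x + d) - h i x
      ≤ theta g h B x d := le_ciSup hbdd i
  have hdesc : g i (x + d) ≤ g i x + ⟪gradient (g i) x, d⟫ + ((L : ℝ) / 2) * ‖d‖ ^ 2 :=
    descent_lemma (g i) (hg i) L (hL i) x d
  have hBnn : 0 ≤ ⟪d, B i x d⟫ := by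
    rcases eq_or_ne d 0 with h0 | h0
    · simp [h0]
    · exact (hBpos i x d h0).le
  have hmain : g i (x + d) + h i (x + d)
      ≤ g i x + h i x + (((L : ℝ) - 2 * ω) / 2) * ‖d‖ ^ 2 - (1 / 2) * ⟪d, B i x d⟫ := by
    nlinarith [hkey, hterm, hdesc]
  refine ⟨by linarith, fun h0 => ?_, fun ⟨hLω, h0⟩ => ?_⟩
  · have := hBpos i x d h0
    linarith
  · have hpos : 0 < ‖d‖ ^ 2 := pow_pos (norm_pos_iff.2 h0) 2
    have := hBpos i x d h0
    nlinarith
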